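/- arXiv:1607.07402 — 7 statements merged into one kernel-verified Lean document; each statement's English description precedes it below -/
import Mathlib

section
/- Let P(t) be a differentiable family of symmetric invertible m×m real matrices solving the Riccati differential equation Ṗ = A₁(t)P + P A₁(t)ᵀ + Q(t) − P C₁(t)ᵀ R(t)⁻¹ C₁(t) P, where A₁(t) is m×m, C₁(t) is p×m, Q(t) is symmetric m×m, and R(t) is symmetric invertible p×p. Let η̃(t) be a differentiable solution of the error equation η̃̇ = [A₁(t) − P(t)C₁(t)ᵀR(t)⁻¹C₁(t)] η̃. Then the function V₂(t) = η̃(t)ᵀ P(t)⁻¹ η̃(t) satisfies the identity dV₂/dt = − η̃ᵀ P⁻¹ (Q + P C₁ᵀ R⁻¹ C₁ P) P⁻¹ η̃ for all t. -/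
open Matrix

noncomputable section
theorem det_diffAt {m : ℕ} {f : ℝ → Matrix (Fin m) (Fin m) ℝ} {t : ℝ}
    (hf : ∀ i j, DifferentiableAt ℝ (fun s => f s i j) t) :
    DifferentiableAt ℝ (fun s => (f s).det) t := by
  simp only [Matrix.det_apply']
  exact DifferentiableAt.fun_sum fun σ _ =>
    (DifferentiableAt.fun_finsetProd (fun i _ => hf (σ i) i)).const_mul _

theorem inv_entry_diffAt {m : ℕ} {f : ℝ → Matrix (Fin m) (Fin m) ℝ} {t : ℝ}
    (hf : ∀ i j, DifferentiableAt ℝ (fun s => f s i j) t)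
    (hu : IsUnit (f t).det) (i j : Fin m) :
    DifferentiableAt ℝ (fun s => (f s)⁻¹ i j) t := by
  have hdet : DifferentiableAt ℝ (fun s => (f s).det) t := det_diffAt hf
  have hadj : DifferentiableAt ℝ (fun s => (f s).adjugate i j) t := by
    simp only [Matrix.adjugate_apply]
    refine det_diffAt fun a b => ?_
    by_cases h : a = j
    · simp [Matrix.updateRow_apply, h]
    · simpa [Matrix.updateRow_apply, h] using hf a b
  have : (fun s => (f s)⁻¹ i j) = fun s => ((f s).det)⁻¹ * (f s).adjugate i j := by
    funext s
    simp [Matrix.inv_def, Ring.inverse_eq_inv']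
  rw [this]
  exact (hdet.inv hu.ne_zero).mul hadj


/-- Along the Riccati differential equation
`Ṗ = A₁P + PA₁ᵀ + Q − PC₁ᵀR⁻¹C₁P` and the estimation-error equation
`η̃̇ = [A₁ − PC₁ᵀR⁻¹C₁]η̃`, the function `V₂(t) = η̃ᵀP⁻¹η̃` satisfies
`dV₂/dt = −η̃ᵀP⁻¹(Q + PC₁ᵀR⁻¹C₁P)P⁻¹η̃`. -/
theorem riccati_lyapunov_derivative_identity
    {m p : ℕ}
    (A₁ : ℝ → Matrix (Fin m) (Fin m) ℝ) (C₁ : ℝ → Matrix (Fin p) (Fin m) ℝ)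
    (Q : ℝ → Matrix (Fin m) (Fin m) ℝ) (R : ℝ → Matrix (Fin p) (Fin p) ℝ)
    (P P' : ℝ → Matrix (Fin m) (Fin m) ℝ)
    (η : ℝ → Fin m → ℝ)
    (hPsymm : ∀ t, (P t).IsSymm)
    (hPinv : ∀ t, IsUnit (P t).det)
    (hQsymm : ∀ t, (Q t).IsSymm)
    (hRsymm : ∀ t, (R t).IsSymm)
    (hRinv : ∀ t, IsUnit (R t).det)
    (hPdiff : ∀ t i j, HasDerivAt (fun s => P s i j) (P' t i j) t)
    (hRic : ∀ t, P' t =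
      A₁ t * P t + P t * (A₁ t)ᵀ + Q t - P t * (C₁ t)ᵀ * (R t)⁻¹ * C₁ t * P t)
    (hη : ∀ t, HasDerivAt η ((A₁ t - P t * (C₁ t)ᵀ * (R t)⁻¹ * C₁ t) *ᵥ η t) t)
    (t : ℝ) :
    HasDerivAt (fun s => η s ⬝ᵥ ((P s)⁻¹ *ᵥ η s))
      (-(η t ⬝ᵥ
        (((P t)⁻¹ * (Q t + P t * (C₁ t)ᵀ * (R t)⁻¹ * C₁ t * P t) * (P t)⁻¹) *ᵥ η t))) t := by
  classical
  set Pi : Matrix (Fin m) (Fin m) ℝ := (P t)⁻¹ with hPidef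
  set B : Matrix (Fin m) (Fin m) ℝ := A₁ t - P t * (C₁ t)ᵀ * (R t)⁻¹ * C₁ t with hBdef
  set η' : Fin m → ℝ := B *ᵥ η t with hη'def
  -- entrywise derivative of inverse
  have hinvdiff : ∀ s i j, DifferentiableAt ℝ (fun u => (P u)⁻¹ i j) s := fun s i j =>
    inv_entry_diffAt (fun i j => (hPdiff s i j).differentiableAt) (hPinv s) i j
  set G' : Matrix (Fin m) (Fin m) ℝ := Matrix.of fun i j => deriv (fun s => (P s)⁻¹ i j) t
    with hG'def
  have hg : ∀ i j, HasDerivAt (fun s => (P s)⁻¹ i j) (G' i j) t := fun i j =>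
    (hinvdiff t i j).hasDerivAt
  -- P * P⁻¹ = 1 pointwise, differentiate to get P' * Pi + P * G' = 0
  have hPPi : P t * Pi = 1 := Matrix.mul_nonsing_inv _ (hPinv t)
  have hPiP : Pi * P t = 1 := Matrix.nonsing_inv_mul _ (hPinv t)
  have hkey : P' t * Pi + P t * G' = 0 := by
    ext i j
    have h1 : HasDerivAt (fun s => ∑ k, P s i k * (P s)⁻¹ k j)
        (∑ k, (P' t i k * (P t)⁻¹ k j + P t i k * G' k j)) t :=
      HasDerivAt.fun_sum fun k _ => (hPdiff t i k).mul (hg k j)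
    have h2 : (fun s => ∑ k, P s i k * (P s)⁻¹ k j) = fun _ => (1 : Matrix (Fin m) (Fin m) ℝ) i j := by
      funext s
      have := Matrix.mul_nonsing_inv _ (hPinv s)
      calc ∑ k, P s i k * (P s)⁻¹ k j = (P s * (P s)⁻¹) i j := by simp [Matrix.mul_apply]
        _ = (1 : Matrix (Fin m) (Fin m) ℝ) i j := by rw [this]
    rw [h2] at h1
    have h3 : (∑ k, (P' t i k * (P t)⁻¹ k j + P t i k * G' k j)) = 0 :=
      h1.unique (hasDerivAt_const _ _)
    simpa [Matrix.add_apply, Matrix.mul_apply, Finset.sum_add_distrib] using h3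
  have hG' : G' = -(Pi * P' t * Pi) := by
    have h4 : P t * G' = -(P' t * Pi) := eq_neg_of_add_eq_zero_right hkey
    calc G' = (Pi * P t) * G' := by rw [hPiP, one_mul]
      _ = Pi * (P t * G') := by rw [Matrix.mul_assoc]
      _ = Pi * (-(P' t * Pi)) := by rw [h4]
      _ = -(Pi * P' t * Pi) := by rw [Matrix.mul_neg, Matrix.mul_assoc]
  -- component derivatives of η
  have hηi : ∀ i, HasDerivAt (fun s => η s i) (η' i) t := fun i => (hasDerivAt_pi.1 (hη t)) i
  -- main derivative computation
  have hV : HasDerivAt (fun s => ∑ i, η s i * (∑ j, (P s)⁻¹ i j * η s j))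
      (∑ i, (η' i * (∑ j, Pi i j * η t j) +
        η t i * (∑ j, (G' i j * η t j + Pi i j * η' j)))) t := by
    refine HasDerivAt.fun_sum fun i _ => (hηi i).mul (HasDerivAt.fun_sum fun j _ => ?_)
    exact (hg i j).mul (hηi j)
  have hfun : (fun s => η s ⬝ᵥ ((P s)⁻¹ *ᵥ η s)) =
      fun s => ∑ i, η s i * (∑ j, (P s)⁻¹ i j * η s j) := by
    funext s; simp [dotProduct, Matrix.mulVec, dotProduct]
  have hval : (∑ i, (η' i * (∑ j, Pi i j * η t j) +
        η t i * (∑ j, (G' i j * η t j + Pi i j * η' j)))) =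
      η' ⬝ᵥ (Pi *ᵥ η t) + η t ⬝ᵥ ((G' + Pi * B) *ᵥ η t) := by
    rw [Matrix.add_mulVec, ← Matrix.mulVec_mulVec, ← hη'def, dotProduct_add]
    simp [dotProduct, Matrix.mulVec, Finset.sum_add_distrib, Finset.mul_sum, mul_add]
  rw [hfun]
  have hswap : ∀ (A : Matrix (Fin m) (Fin m) ℝ) (x y : Fin m → ℝ),
      (A *ᵥ x) ⬝ᵥ y = x ⬝ᵥ (Aᵀ *ᵥ y) := by
    intro A x y
    rw [dotProduct_comm, dotProduct_mulVec, ← Matrix.mulVec_transpose, dotProduct_comm]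
  have hN : Bᵀ * Pi + (G' + Pi * B) =
      -(Pi * (Q t + P t * (C₁ t)ᵀ * (R t)⁻¹ * C₁ t * P t) * Pi) := by
    have hc : ∀ X : Matrix (Fin m) (Fin m) ℝ, Pi * (P t * X) = X := fun X => by
      rw [← Matrix.mul_assoc, hPiP, one_mul]
    have hBt : Bᵀ = (A₁ t)ᵀ - (C₁ t)ᵀ * ((R t)⁻¹ * (C₁ t * P t)) := by
      rw [hBdef, transpose_sub, transpose_mul, transpose_mul, transpose_mul,
        transpose_transpose, Matrix.transpose_nonsing_inv, (hRsymm t).eq, (hPsymm t).eq]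
    rw [hBt, hG', hRic t, hBdef]
    simp only [Matrix.mul_assoc, sub_mul, mul_sub, add_mul, mul_add, neg_mul, mul_neg,
      neg_neg, neg_add, neg_sub, hPPi, hc, mul_one, Matrix.mul_one, Matrix.one_mul]
    abel
  have hfinal : η' ⬝ᵥ (Pi *ᵥ η t) + η t ⬝ᵥ ((G' + Pi * B) *ᵥ η t) =
      -(η t ⬝ᵥ
        ((Pi * (Q t + P t * (C₁ t)ᵀ * (R t)⁻¹ * C₁ t * P t) * Pi) *ᵥ η t)) := by
    rw [hη'def, hswap, Matrix.mulVec_mulVec, ← dotProduct_add, ← Matrix.add_mulVec, hN,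
      Matrix.neg_mulVec, dotProduct_neg]
  rw [hval, hfinal] at hV
  exact hV
end
end

section
/- Let P(t) be a differentiable family of symmetric positive definite m×m matrices solving Ṗ = A₁(t)P + PA₁(t)ᵀ + Q(t) − PC₁(t)ᵀR(t)⁻¹C₁(t)P, with Q(t) symmetric satisfying Q(t) ⪰ q₁I (q₁ > 0), R(t) symmetric positive definite, and suppose P(t)⁻¹ ⪰ p₁I for all t ≥ 0 (p₁ > 0). Let η̃(t) solve η̃̇ = [A₁(t) − P(t)C₁(t)ᵀR(t)⁻¹C₁(t)]η̃. Then V₂(t) = η̃(t)ᵀP(t)⁻¹η̃(t) satisfies dV₂/dt ≤ −k₁ V₂(t) for all t ≥ 0, with k₁ = q₁p₁ > 0. -/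
open Matrix

noncomputable section

attribute [local instance] Matrix.linftyOpNormedRing Matrix.linftyOpNormedAlgebra




def matPiEquiv (m : ℕ) : Matrix (Fin m) (Fin m) ℝ ≃ₗ[ℝ] (Fin m → Fin m → ℝ) where
  toFun M := fun i j => M i j
  invFun f := Matrix.of f
  map_add' _ _ := rfl
  map_smul' _ _ := rfl
  left_inv _ := rfl
  right_inv _ := rfl

lemma matrix_hasDerivAt {m : ℕ} {P P' : ℝ → Matrix (Fin m) (Fin m) ℝ} {t : ℝ}
    (h : ∀ i j, HasDerivAt (fun s => P s i j) (P' t i j) t) :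
    HasDerivAt P (P' t) t := by
  have h1 : HasDerivAt (fun s => (fun i j => P s i j)) (fun i j => P' t i j) t :=
    hasDerivAt_pi.2 fun i => hasDerivAt_pi.2 fun j => h i j
  have h2 := ((matPiEquiv m).toContinuousLinearEquiv.symm.toContinuousLinearMap.hasFDerivAt).comp_hasDerivAt t h1
  have : (⇑(matPiEquiv m).toContinuousLinearEquiv.symm.toContinuousLinearMap ∘ fun s i j => P s i j) = P := by
    ext s i j
    rfl
  rw [this] at h2
  exact h2

lemma matrix_entry_hasDerivAt {m : ℕ} {P : ℝ → Matrix (Fin m) (Fin m) ℝ}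
    {D : Matrix (Fin m) (Fin m) ℝ} {t : ℝ}
    (h : HasDerivAt P D t) (i j : Fin m) :
    HasDerivAt (fun s => P s i j) (D i j) t := by
  have h2 := ((matPiEquiv m).toContinuousLinearEquiv.toContinuousLinearMap.hasFDerivAt).comp_hasDerivAt t h
  have h3 := hasDerivAt_pi.1 (hasDerivAt_pi.1 h2 i) j
  exact h3

lemma matrix_inv_hasDerivAt {m : ℕ} {P : ℝ → Matrix (Fin m) (Fin m) ℝ}
    {D : Matrix (Fin m) (Fin m) ℝ} {t : ℝ}
    (hPt : IsUnit (P t)) (h : HasDerivAt P D t) :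
    HasDerivAt (fun s => (P s)⁻¹) (-((P t)⁻¹ * D * (P t)⁻¹)) t := by
  have h2 := (hasFDerivAt_ringInverse (𝕜 := ℝ) hPt.unit).comp_hasDerivAt t h
  have h3 : HasDerivAt (fun s => Ring.inverse (P s))
      (-((P t)⁻¹ * D * (P t)⁻¹)) t := by
    refine h2.congr_deriv ?_
    simp only [ContinuousLinearMap.neg_apply, ContinuousLinearMap.mulLeftRight_apply,
      Matrix.coe_units_inv, IsUnit.unit_spec]
  simpa only [Matrix.nonsing_inv_eq_ringInverse] using h3

lemma real_transpose_eq {k l : ℕ} (M : Matrix (Fin k) (Fin l) ℝ) : Mᴴ = Mᵀ := by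
  ext i j; simp [Matrix.conjTranspose_apply]

lemma aux_dot {k l : ℕ} (M : Matrix (Fin k) (Fin l) ℝ) (x : Fin l → ℝ) (y : Fin k → ℝ) :
    (M *ᵥ x) ⬝ᵥ y = x ⬝ᵥ (Mᵀ *ᵥ y) := by
  rw [dotProduct_mulVec, Matrix.vecMul_transpose]

lemma key_identity {k q : ℕ} (A Pm S Qm P'm : Matrix (Fin k) (Fin k) ℝ)
    (C : Matrix (Fin q) (Fin k) ℝ) (Rm : Matrix (Fin q) (Fin q) ℝ)
    (hps : Pm * S = 1) (hsp : S * Pm = 1) (hPsym : Pmᵀ = Pm) (hRsym : Rmᵀ = Rm)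
    (hP' : P'm = A * Pm + Pm * Aᵀ + Qm - Pm * Cᵀ * Rm⁻¹ * C * Pm) :
    (A - Pm * Cᵀ * Rm⁻¹ * C)ᵀ * S + (-(S * P'm * S)) + S * (A - Pm * Cᵀ * Rm⁻¹ * C)
      = -((Cᵀ * Rm⁻¹ * C) + S * Qm * S) := by
  have h1 : ∀ X : Matrix (Fin k) (Fin k) ℝ, S * (Pm * X) = X := fun X => by
    rw [← Matrix.mul_assoc, hsp, one_mul]
  have h2 : ∀ X : Matrix (Fin k) (Fin k) ℝ, Pm * (S * X) = X := fun X => by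
    rw [← Matrix.mul_assoc, hps, one_mul]
  have hRinv : (Rm⁻¹)ᵀ = Rm⁻¹ := by rw [Matrix.transpose_nonsing_inv, hRsym]
  subst hP'
  simp only [Matrix.transpose_sub, Matrix.transpose_mul, Matrix.transpose_transpose,
    hPsym, hRinv]
  simp only [Matrix.mul_add, Matrix.add_mul, Matrix.mul_sub, Matrix.sub_mul,
    Matrix.mul_assoc, h1, h2, hps, hsp, Matrix.mul_one, Matrix.one_mul]
  abel

/-- Lyapunov decay estimate for the extended Kalman filter error dynamics:
along `Ṗ = A₁P + PA₁ᵀ + Q − PC₁ᵀR⁻¹C₁P` with `Q ⪰ q₁I`, `R ≻ 0`, `P⁻¹ ⪰ p₁I`, and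
`η̃̇ = [A₁ − PC₁ᵀR⁻¹C₁]η̃`, the function `V₂ = η̃ᵀP⁻¹η̃` satisfies `dV₂/dt ≤ −k₁V₂`
with `k₁ = q₁p₁`. -/
theorem ekf_lyapunov_decay
    {m p : ℕ} (q₁ p₁ : ℝ) (hq₁ : 0 < q₁) (hp₁ : 0 < p₁)
    (A₁ : ℝ → Matrix (Fin m) (Fin m) ℝ) (C₁ : ℝ → Matrix (Fin p) (Fin m) ℝ)
    (Q : ℝ → Matrix (Fin m) (Fin m) ℝ) (R : ℝ → Matrix (Fin p) (Fin p) ℝ)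
    (P P' : ℝ → Matrix (Fin m) (Fin m) ℝ)
    (η : ℝ → Fin m → ℝ)
    (hP : ∀ t, (P t).PosDef)
    (hQsymm : ∀ t, (Q t).IsSymm)
    (hQ : ∀ t, (Q t - q₁ • (1 : Matrix (Fin m) (Fin m) ℝ)).PosSemidef)
    (hR : ∀ t, (R t).PosDef)
    (hPinv : ∀ t, 0 ≤ t → ((P t)⁻¹ - p₁ • (1 : Matrix (Fin m) (Fin m) ℝ)).PosSemidef)
    (hPdiff : ∀ t i j, HasDerivAt (fun s => P s i j) (P' t i j) t)
    (hRic : ∀ t, P' t =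
      A₁ t * P t + P t * (A₁ t)ᵀ + Q t - P t * (C₁ t)ᵀ * (R t)⁻¹ * C₁ t * P t)
    (hη : ∀ t, HasDerivAt η ((A₁ t - P t * (C₁ t)ᵀ * (R t)⁻¹ * C₁ t) *ᵥ η t) t) :
    ∀ t, 0 ≤ t → ∃ d : ℝ,
      HasDerivAt (fun s => η s ⬝ᵥ ((P s)⁻¹ *ᵥ η s)) d t ∧
      d ≤ -(q₁ * p₁) * (η t ⬝ᵥ ((P t)⁻¹ *ᵥ η t)) := by
  intro t ht
  -- notation
  set S : Matrix (Fin m) (Fin m) ℝ := (P t)⁻¹ with hS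
  have h_det : IsUnit (P t).det := isUnit_iff_ne_zero.2 (hP t).det_pos.ne'
  have hu : IsUnit (P t) := (Matrix.isUnit_iff_isUnit_det _).2 h_det
  have hps : P t * S = 1 := Matrix.mul_nonsing_inv _ h_det
  have hsp : S * P t = 1 := Matrix.nonsing_inv_mul _ h_det
  set F : Matrix (Fin m) (Fin m) ℝ := A₁ t - P t * (C₁ t)ᵀ * (R t)⁻¹ * C₁ t with hF
  set n : Fin m → ℝ := η t with hn
  set n' : Fin m → ℝ := F *ᵥ n with hn'
  set D : Matrix (Fin m) (Fin m) ℝ := -(S * P' t * S) with hD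
  -- derivative of P and its inverse
  have hPder : HasDerivAt P (P' t) t := matrix_hasDerivAt (hPdiff t)
  have hSder : HasDerivAt (fun s => (P s)⁻¹) D t := matrix_inv_hasDerivAt hu hPder
  have hSent : ∀ i j, HasDerivAt (fun s => (P s)⁻¹ i j) (D i j) t :=
    fun i j => matrix_entry_hasDerivAt hSder i j
  have hηent : ∀ i, HasDerivAt (fun s => η s i) (n' i) t :=
    fun i => hasDerivAt_pi.1 (hη t) i
  -- derivative of V
  set dval : ℝ := n' ⬝ᵥ (S *ᵥ n) + n ⬝ᵥ (D *ᵥ n) + n ⬝ᵥ (S *ᵥ n') with hdval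
  have hmv : ∀ i, HasDerivAt (fun s => ((P s)⁻¹ *ᵥ η s) i) ((D *ᵥ n + S *ᵥ n') i) t := by
    intro i
    have h0 : HasDerivAt (fun s => ∑ j, (P s)⁻¹ i j * η s j)
        (∑ j, (D i j * n j + S i j * n' j)) t :=
      HasDerivAt.fun_sum fun j _ => (hSent i j).mul (hηent j)
    have heq : (fun s => ((P s)⁻¹ *ᵥ η s) i) = fun s => ∑ j, (P s)⁻¹ i j * η s j := by
      funext s; simp [Matrix.mulVec, dotProduct]
    rw [heq]
    convert h0 using 1
    simp [Matrix.mulVec, dotProduct, Finset.sum_add_distrib]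
  have hV : HasDerivAt (fun s => η s ⬝ᵥ ((P s)⁻¹ *ᵥ η s)) dval t := by
    have h0 : HasDerivAt (fun s => ∑ i, η s i * ((P s)⁻¹ *ᵥ η s) i)
        (∑ i, (n' i * (S *ᵥ n) i + n i * ((D *ᵥ n + S *ᵥ n') i))) t :=
      HasDerivAt.fun_sum fun i _ => (hηent i).mul (hmv i)
    have heq : (fun s => η s ⬝ᵥ ((P s)⁻¹ *ᵥ η s)) = fun s => ∑ i, η s i * ((P s)⁻¹ *ᵥ η s) i := by
      funext s; simp [dotProduct]
    rw [heq]
    convert h0 using 1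
    simp [hdval, dotProduct, Pi.add_apply, mul_add, Finset.sum_add_distrib]
    ring
  refine ⟨dval, hV, ?_⟩
  -- now the bound
  have hPsym : (P t)ᵀ = P t := by rw [← real_transpose_eq]; exact (hP t).1
  have hRsym : (R t)ᵀ = R t := by rw [← real_transpose_eq]; exact (hR t).1
  have hSsym : Sᵀ = S := by rw [← real_transpose_eq]; exact ((hP t).inv).1
  have key := key_identity (A₁ t) (P t) S (Q t) (P' t) (C₁ t) (R t) hps hsp hPsym hRsym (hRic t)
  have hd1 : n' ⬝ᵥ (S *ᵥ n) = n ⬝ᵥ ((Fᵀ * S) *ᵥ n) := by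
    rw [hn', aux_dot, Matrix.mulVec_mulVec]
  have hd3 : n ⬝ᵥ (S *ᵥ n') = n ⬝ᵥ ((S * F) *ᵥ n) := by rw [hn', Matrix.mulVec_mulVec]
  set L : Matrix (Fin m) (Fin m) ℝ := (C₁ t)ᵀ * (R t)⁻¹ * C₁ t with hLdef
  have hdq : dval = -(n ⬝ᵥ (L *ᵥ n)) - n ⬝ᵥ ((S * Q t * S) *ᵥ n) := by
    rw [hdval, hd1, hd3]
    have : Fᵀ * S + D + S * F = -(L + S * Q t * S) := key
    calc n ⬝ᵥ ((Fᵀ * S) *ᵥ n) + n ⬝ᵥ (D *ᵥ n) + n ⬝ᵥ ((S * F) *ᵥ n)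
        = n ⬝ᵥ ((Fᵀ * S + D + S * F) *ᵥ n) := by
          simp [Matrix.add_mulVec, dotProduct_add]
      _ = n ⬝ᵥ ((-(L + S * Q t * S)) *ᵥ n) := by rw [this]
      _ = -(n ⬝ᵥ (L *ᵥ n)) - n ⬝ᵥ ((S * Q t * S) *ᵥ n) := by
          simp [Matrix.neg_mulVec, Matrix.add_mulVec, dotProduct_add,
            dotProduct_neg]
          ring
  have hL : L.PosSemidef := by
    have := ((hR t).inv).posSemidef.conjTranspose_mul_mul_same (C₁ t)
    simpa [real_transpose_eq, hLdef, Matrix.mul_assoc] using this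
  have hT1 : 0 ≤ n ⬝ᵥ (L *ᵥ n) := by simpa using hL.dotProduct_mulVec_nonneg n
  set w : Fin m → ℝ := S *ᵥ n with hw
  have hws : ∀ z, n ⬝ᵥ (S *ᵥ z) = w ⬝ᵥ z := fun z => by
    have h0 := aux_dot S n z
    rw [hSsym] at h0
    exact h0.symm
  have hsw : n ⬝ᵥ ((S * Q t * S) *ᵥ n) = w ⬝ᵥ (Q t *ᵥ w) := by
    rw [show (S * Q t * S) *ᵥ n = S *ᵥ (Q t *ᵥ (S *ᵥ n)) by
      simp [Matrix.mulVec_mulVec, Matrix.mul_assoc], hws]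
  have hQw : q₁ * (w ⬝ᵥ w) ≤ w ⬝ᵥ (Q t *ᵥ w) := by
    have h0 := (hQ t).dotProduct_mulVec_nonneg w
    simp only [star_trivial, Matrix.sub_mulVec, dotProduct_sub,
      Matrix.smul_mulVec, Matrix.one_mulVec, dotProduct_smul,
      smul_eq_mul, sub_nonneg] at h0
    exact h0
  have hV1 : p₁ * (n ⬝ᵥ n) ≤ n ⬝ᵥ (S *ᵥ n) := by
    have h0 := (hPinv t ht).dotProduct_mulVec_nonneg n
    simp only [star_trivial, Matrix.sub_mulVec, dotProduct_sub,
      Matrix.smul_mulVec, Matrix.one_mulVec, dotProduct_smul,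
      smul_eq_mul, sub_nonneg] at h0
    exact h0
  have hV1' : p₁ * (n ⬝ᵥ n) ≤ n ⬝ᵥ w := hV1
  have hCS : (n ⬝ᵥ w) ^ 2 ≤ (n ⬝ᵥ n) * (w ⬝ᵥ w) := by
    have h0 := Finset.sum_mul_sq_le_sq_mul_sq Finset.univ n w
    simpa [dotProduct, sq] using h0
  have hnn : 0 ≤ n ⬝ᵥ n := Finset.sum_nonneg fun i _ => mul_self_nonneg _
  have hww : 0 ≤ w ⬝ᵥ w := Finset.sum_nonneg fun i _ => mul_self_nonneg _
  have hVpos : 0 ≤ n ⬝ᵥ w := le_trans (by positivity) hV1'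
  have hkey : p₁ * (n ⬝ᵥ w) ≤ w ⬝ᵥ w := by
    rcases eq_or_lt_of_le hVpos with h | h
    · rw [← h]; simpa using hww
    · nlinarith [mul_le_mul_of_nonneg_right hV1' hww, mul_le_mul_of_nonneg_left hCS hp₁.le]
  have hfin : q₁ * p₁ * (n ⬝ᵥ w) ≤ q₁ * (w ⬝ᵥ w) := by
    rw [mul_assoc]
    exact mul_le_mul_of_nonneg_left hkey hq₁.le
  have : dval ≤ -(q₁ * p₁) * (n ⬝ᵥ w) := by
    rw [hdq, hsw]
    nlinarith [hT1, hQw, hfin]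
  exact this
end
end

section
/- Under the hypotheses of the preceding decay estimate, assume in addition that p₁I ⪯ P(t)⁻¹ ⪯ p₂I for all t ≥ 0 with 0 < p₁ ≤ p₂. Then the estimation error decays exponentially: ‖η̃(t)‖ ≤ √(p₂/p₁) · e^{−q₁p₁ t/2} · ‖η̃(0)‖ for all t ≥ 0. In particular, the origin of the error dynamics η̃̇ = [A₁(t) − P(t)C₁(t)ᵀR(t)⁻¹C₁(t)]η̃ is globally exponentially stable. -/
open Matrix

noncomputable section

/-- The Euclidean norm of a vector in `ℝ^m`. -/
def euclNorm {m : ℕ} (x : Fin m → ℝ) : ℝ := Real.sqrt (x ⬝ᵥ x)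

private lemma diffAt_finset_prod {ι : Type*} {u : Finset ι} {f : ι → ℝ → ℝ} {t : ℝ}
    (h : ∀ i ∈ u, DifferentiableAt ℝ (f i) t) :
    DifferentiableAt ℝ (fun s => ∏ i ∈ u, f i s) t := by
  classical
  induction u using Finset.induction_on with
  | empty => simpa using differentiableAt_const (1 : ℝ)
  | @insert a s ha ih =>
    simp only [Finset.prod_insert ha]
    exact (h a (Finset.mem_insert_self a s)).mul
      (ih fun i hi => h i (Finset.mem_insert_of_mem hi))

private lemma diffAt_det {m : ℕ} {f : ℝ → Matrix (Fin m) (Fin m) ℝ} {t : ℝ}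
    (h : ∀ i j, DifferentiableAt ℝ (fun s => f s i j) t) :
    DifferentiableAt ℝ (fun s => (f s).det) t := by
  simp only [Matrix.det_apply']
  exact DifferentiableAt.fun_sum fun σ _ =>
    (diffAt_finset_prod fun i _ => h (σ i) i).const_mul _

private lemma diffAt_adjugate {m : ℕ} {f : ℝ → Matrix (Fin m) (Fin m) ℝ} {t : ℝ}
    (h : ∀ i j, DifferentiableAt ℝ (fun s => f s i j) t) (i j : Fin m) :
    DifferentiableAt ℝ (fun s => (f s).adjugate i j) t := by
  simp only [Matrix.adjugate_apply]
  refine diffAt_det fun k l => ?_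
  simp only [Matrix.updateRow_apply]
  split_ifs
  · exact differentiableAt_const _
  · exact h k l

private lemma diffAt_inv_entry {m : ℕ} {f : ℝ → Matrix (Fin m) (Fin m) ℝ} {t : ℝ}
    (h : ∀ i j, DifferentiableAt ℝ (fun s => f s i j) t) (hdet : (f t).det ≠ 0) (i j : Fin m) :
    DifferentiableAt ℝ (fun s => (f s)⁻¹ i j) t := by
  have he : (fun s => (f s)⁻¹ i j) = fun s => ((f s).det)⁻¹ * (f s).adjugate i j := by
    funext s
    rw [Matrix.inv_def, Matrix.smul_apply, Ring.inverse_eq_inv, smul_eq_mul]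
  rw [he]
  exact ((diffAt_det h).inv hdet).mul (diffAt_adjugate h i j)

private lemma quad_nonneg {m : ℕ} {M : Matrix (Fin m) (Fin m) ℝ} (hM : M.PosSemidef)
    (x : Fin m → ℝ) : 0 ≤ x ⬝ᵥ (M *ᵥ x) := by
  simpa using hM.dotProduct_mulVec_nonneg x

private lemma sq_psd {m : ℕ} {B : Matrix (Fin m) (Fin m) ℝ} {a : ℝ}
    (hB : B.PosSemidef) (h : (B - a • (1 : Matrix (Fin m) (Fin m) ℝ)).PosSemidef) :
    (B * B - a • B).PosSemidef := by
  obtain ⟨S, hSh, hSS⟩ : ∃ S : Matrix (Fin m) (Fin m) ℝ, Sᴴ = S ∧ S * S = B :=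
    open scoped MatrixOrder in ⟨CFC.sqrt B, (CFC.sqrt_nonneg B).posSemidef.1, CFC.sqrt_mul_sqrt_self B hB.nonneg⟩
  have hs := h.conjTranspose_mul_mul_same S
  have key : Sᴴ * (B - a • (1 : Matrix (Fin m) (Fin m) ℝ)) * S = B * B - a • B := by
    rw [hSh, mul_sub, sub_mul, mul_smul_comm, smul_mul_assoc, mul_one, ← hSS]
    congr 1
    simp only [mul_assoc]
  rwa [key] at hs

/-- Under the EKF Lyapunov decay estimate hypotheses, if additionally
`p₁I ⪯ P(t)⁻¹ ⪯ p₂I` for all `t ≥ 0`, the estimation error decays exponentially: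
`‖η̃(t)‖ ≤ √(p₂/p₁)·e^{−q₁p₁t/2}·‖η̃(0)‖`, i.e. the origin of the error dynamics is
globally exponentially stable. -/
theorem ekf_error_exponential_decay
    {m p : ℕ} (q₁ p₁ p₂ : ℝ) (hq₁ : 0 < q₁) (hp₁ : 0 < p₁) (hp₂ : p₁ ≤ p₂)
    (A₁ : ℝ → Matrix (Fin m) (Fin m) ℝ) (C₁ : ℝ → Matrix (Fin p) (Fin m) ℝ)
    (Q : ℝ → Matrix (Fin m) (Fin m) ℝ) (R : ℝ → Matrix (Fin p) (Fin p) ℝ)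
    (P P' : ℝ → Matrix (Fin m) (Fin m) ℝ)
    (η : ℝ → Fin m → ℝ)
    (hP : ∀ t, (P t).PosDef)
    (hQsymm : ∀ t, (Q t).IsSymm)
    (hQ : ∀ t, (Q t - q₁ • (1 : Matrix (Fin m) (Fin m) ℝ)).PosSemidef)
    (hR : ∀ t, (R t).PosDef)
    (hPinvLow : ∀ t, 0 ≤ t → ((P t)⁻¹ - p₁ • (1 : Matrix (Fin m) (Fin m) ℝ)).PosSemidef)
    (hPinvUp : ∀ t, 0 ≤ t → (p₂ • (1 : Matrix (Fin m) (Fin m) ℝ) - (P t)⁻¹).PosSemidef)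
    (hPdiff : ∀ t i j, HasDerivAt (fun s => P s i j) (P' t i j) t)
    (hRic : ∀ t, P' t =
      A₁ t * P t + P t * (A₁ t)ᵀ + Q t - P t * (C₁ t)ᵀ * (R t)⁻¹ * C₁ t * P t)
    (hη : ∀ t, HasDerivAt η ((A₁ t - P t * (C₁ t)ᵀ * (R t)⁻¹ * C₁ t) *ᵥ η t) t) :
    ∀ t, 0 ≤ t →
      euclNorm (η t) ≤
        Real.sqrt (p₂ / p₁) * Real.exp (-(q₁ * p₁ * t) / 2) * euclNorm (η 0) := by
  classical
  have hdet : ∀ s, (P s).det ≠ 0 := fun s => (hP s).det_pos.ne'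
  have hdetu : ∀ s, IsUnit (P s).det := fun s => (hdet s).isUnit
  have hNP : ∀ s, (P s)⁻¹ * P s = 1 := fun s => Matrix.nonsing_inv_mul _ (hdetu s)
  have hPN : ∀ s, P s * (P s)⁻¹ = 1 := fun s => Matrix.mul_nonsing_inv _ (hdetu s)
  have hPsymm : ∀ s, (P s)ᵀ = P s := fun s => by
    have h := (hP s).1
    rwa [Matrix.IsHermitian, Matrix.conjTranspose_eq_transpose_of_trivial] at h
  have hNsymm : ∀ s, ((P s)⁻¹)ᵀ = (P s)⁻¹ := fun s => by
    rw [Matrix.transpose_nonsing_inv, hPsymm]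
  have hRsymm : ∀ s, ((R s)⁻¹)ᵀ = (R s)⁻¹ := fun s => by
    have h := (hR s).1
    rw [Matrix.IsHermitian, Matrix.conjTranspose_eq_transpose_of_trivial] at h
    rw [Matrix.transpose_nonsing_inv, h]
  have hNdiff : ∀ t i j, DifferentiableAt ℝ (fun s => (P s)⁻¹ i j) t := fun t i j =>
    diffAt_inv_entry (fun i j => (hPdiff t i j).differentiableAt) (hdet t) i j
  -- derivative of the inverse
  have hNderiv : ∀ t i j, HasDerivAt (fun s => (P s)⁻¹ i j)
      ((-((P t)⁻¹ * P' t * (P t)⁻¹)) i j) t := by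
    intro t
    have hDd : ∀ i j, HasDerivAt (fun s => (P s)⁻¹ i j)
        ((Matrix.of fun i j => deriv (fun s => (P s)⁻¹ i j) t) i j) t := fun i j =>
      (hNdiff t i j).hasDerivAt
    set Dm : Matrix (Fin m) (Fin m) ℝ := Matrix.of fun i j => deriv (fun s => (P s)⁻¹ i j) t
      with hDm
    have hsum : Dm * P t + (P t)⁻¹ * P' t = 0 := by
      ext i j
      have h1 : HasDerivAt (fun s => ∑ k, (P s)⁻¹ i k * P s k j)
          (∑ k, (Dm i k * P t k j + (P t)⁻¹ i k * P' t k j)) t :=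
        HasDerivAt.fun_sum fun k _ => (hDd i k).mul (hPdiff t k j)
      have h2 : (fun s => ∑ k, (P s)⁻¹ i k * P s k j)
          = fun _ => (1 : Matrix (Fin m) (Fin m) ℝ) i j := by
        funext s
        rw [← Matrix.mul_apply, hNP s]
      rw [h2] at h1
      have h3 := h1.unique (hasDerivAt_const _ _)
      simp only [Matrix.add_apply, Matrix.mul_apply, Matrix.zero_apply]
      rw [← Finset.sum_add_distrib]
      exact h3
    have hDval : Dm = -((P t)⁻¹ * P' t * (P t)⁻¹) := by
      have h0 : Dm * P t = -((P t)⁻¹ * P' t) := eq_neg_of_add_eq_zero_left hsum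
      calc Dm = Dm * (P t * (P t)⁻¹) := by rw [hPN t, mul_one]
        _ = Dm * P t * (P t)⁻¹ := by rw [mul_assoc]
        _ = -((P t)⁻¹ * P' t) * (P t)⁻¹ := by rw [h0]
        _ = -((P t)⁻¹ * P' t * (P t)⁻¹) := by rw [neg_mul]
    intro i j
    exact hDval ▸ hDd i j
  set F : ℝ → Matrix (Fin m) (Fin m) ℝ :=
    fun s => A₁ s - P s * (C₁ s)ᵀ * (R s)⁻¹ * C₁ s with hFdef
  have hηd : ∀ s, HasDerivAt η (F s *ᵥ η s) s := fun s => hη s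
  have hηc : ∀ s i, HasDerivAt (fun u => η u i) ((F s *ᵥ η s) i) s := fun s i =>
    hasDerivAt_pi.1 (hηd s) i
  -- derivative of the Lyapunov function
  have hVder : ∀ s, HasDerivAt (fun u => η u ⬝ᵥ ((P u)⁻¹ *ᵥ η u))
      ((F s *ᵥ η s) ⬝ᵥ ((P s)⁻¹ *ᵥ η s)
        + (η s ⬝ᵥ ((-((P s)⁻¹ * P' s * (P s)⁻¹)) *ᵥ η s)
          + η s ⬝ᵥ ((P s)⁻¹ *ᵥ (F s *ᵥ η s)))) s := by
    intro s
    have h1 : HasDerivAt (fun u => ∑ i, η u i * (∑ j, (P u)⁻¹ i j * η u j))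
        (∑ i, ((F s *ᵥ η s) i * (∑ j, (P s)⁻¹ i j * η s j)
          + η s i * (∑ j, ((-((P s)⁻¹ * P' s * (P s)⁻¹)) i j * η s j
            + (P s)⁻¹ i j * (F s *ᵥ η s) j)))) s :=
      HasDerivAt.fun_sum fun i _ => (hηc s i).mul
        (HasDerivAt.fun_sum fun j _ => (hNderiv s i j).mul (hηc s j))
    have hfun : (fun u => η u ⬝ᵥ ((P u)⁻¹ *ᵥ η u))
        = (fun u => ∑ i, η u i * (∑ j, (P u)⁻¹ i j * η u j)) := by
      funext u
      simp [dotProduct, Matrix.mulVec]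
    rw [hfun]
    convert h1 using 1
    simp only [dotProduct, Matrix.mulVec, Finset.sum_add_distrib, mul_add,
      Finset.mul_sum, Finset.sum_mul]
  have quadT : ∀ (M : Matrix (Fin m) (Fin m) ℝ) (x y : Fin m → ℝ),
      (M *ᵥ x) ⬝ᵥ y = x ⬝ᵥ (Mᵀ *ᵥ y) := by
    intro M x y
    rw [Matrix.dotProduct_mulVec, Matrix.vecMul_transpose]
  -- the key matrix identity
  have hMid : ∀ s, (F s)ᵀ * (P s)⁻¹ + (-((P s)⁻¹ * P' s * (P s)⁻¹) + (P s)⁻¹ * F s)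
      = -((P s)⁻¹ * Q s * (P s)⁻¹) - ((C₁ s)ᵀ * (R s)⁻¹ * C₁ s) := by
    intro s
    have hFt : (F s)ᵀ = (A₁ s)ᵀ - (C₁ s)ᵀ * ((R s)⁻¹ * (C₁ s * P s)) := by
      rw [hFdef]
      simp only [Matrix.transpose_sub, Matrix.transpose_mul, Matrix.transpose_transpose,
        hRsymm, hPsymm, Matrix.mul_assoc]
    have e1 : ∀ X : Matrix (Fin m) (Fin m) ℝ, (P s)⁻¹ * (P s * X) = X := fun X => by
      rw [← Matrix.mul_assoc, hNP s, Matrix.one_mul]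
    rw [hFt, hRic s]
    simp only [hFdef]
    simp only [mul_add, add_mul, mul_sub, sub_mul, neg_mul, mul_neg, neg_neg,
      Matrix.mul_assoc, hPN s, Matrix.mul_one, Matrix.one_mul, e1]
    abel
  -- the Lyapunov differential inequality
  have hVd_le : ∀ s, 0 ≤ s →
      (F s *ᵥ η s) ⬝ᵥ ((P s)⁻¹ *ᵥ η s)
        + (η s ⬝ᵥ ((-((P s)⁻¹ * P' s * (P s)⁻¹)) *ᵥ η s)
          + η s ⬝ᵥ ((P s)⁻¹ *ᵥ (F s *ᵥ η s)))
      ≤ -(q₁ * p₁ * (η s ⬝ᵥ ((P s)⁻¹ *ᵥ η s))) := by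
    intro s hs
    have hq : (F s *ᵥ η s) ⬝ᵥ ((P s)⁻¹ *ᵥ η s)
        + (η s ⬝ᵥ ((-((P s)⁻¹ * P' s * (P s)⁻¹)) *ᵥ η s)
          + η s ⬝ᵥ ((P s)⁻¹ *ᵥ (F s *ᵥ η s)))
        = -(η s ⬝ᵥ (((P s)⁻¹ * Q s * (P s)⁻¹) *ᵥ η s))
          - η s ⬝ᵥ (((C₁ s)ᵀ * (R s)⁻¹ * C₁ s) *ᵥ η s) := by
      rw [quadT, Matrix.mulVec_mulVec, Matrix.mulVec_mulVec,
        ← dotProduct_add, ← dotProduct_add,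
        ← Matrix.add_mulVec, ← Matrix.add_mulVec, hMid s,
        Matrix.sub_mulVec, dotProduct_sub, Matrix.neg_mulVec, dotProduct_neg]
    rw [hq]
    have hswap : ∀ w, η s ⬝ᵥ ((P s)⁻¹ *ᵥ w) = ((P s)⁻¹ *ᵥ η s) ⬝ᵥ w := fun w => by
      rw [quadT, hNsymm]
    have hNpsd := (hP s).inv.posSemidef
    have hz1 : q₁ * (((P s)⁻¹ *ᵥ η s) ⬝ᵥ ((P s)⁻¹ *ᵥ η s))
        ≤ ((P s)⁻¹ *ᵥ η s) ⬝ᵥ (Q s *ᵥ ((P s)⁻¹ *ᵥ η s)) := by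
      have h0 := quad_nonneg (hQ s) ((P s)⁻¹ *ᵥ η s)
      rw [Matrix.sub_mulVec, dotProduct_sub, Matrix.smul_mulVec,
        Matrix.one_mulVec, dotProduct_smul, smul_eq_mul] at h0
      linarith
    have heq1 : η s ⬝ᵥ (((P s)⁻¹ * Q s * (P s)⁻¹) *ᵥ η s)
        = ((P s)⁻¹ *ᵥ η s) ⬝ᵥ (Q s *ᵥ ((P s)⁻¹ *ᵥ η s)) := by
      rw [← Matrix.mulVec_mulVec, ← Matrix.mulVec_mulVec, hswap]
    have hz2 : p₁ * (η s ⬝ᵥ ((P s)⁻¹ *ᵥ η s))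
        ≤ ((P s)⁻¹ *ᵥ η s) ⬝ᵥ ((P s)⁻¹ *ᵥ η s) := by
      have hpsd := sq_psd hNpsd (hPinvLow s hs)
      have h0 := quad_nonneg hpsd (η s)
      rw [Matrix.sub_mulVec, dotProduct_sub, Matrix.smul_mulVec,
        dotProduct_smul, smul_eq_mul] at h0
      have heq2 : η s ⬝ᵥ (((P s)⁻¹ * (P s)⁻¹) *ᵥ η s)
          = ((P s)⁻¹ *ᵥ η s) ⬝ᵥ ((P s)⁻¹ *ᵥ η s) := by
        rw [← Matrix.mulVec_mulVec, hswap]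
      linarith
    have hz3 : 0 ≤ η s ⬝ᵥ (((C₁ s)ᵀ * (R s)⁻¹ * C₁ s) *ᵥ η s) := by
      have hpsd : ((C₁ s)ᵀ * (R s)⁻¹ * C₁ s).PosSemidef := by
        have h0 := ((hR s).inv.posSemidef).conjTranspose_mul_mul_same (C₁ s)
        rwa [Matrix.conjTranspose_eq_transpose_of_trivial] at h0
      exact quad_nonneg hpsd (η s)
    have hV0 : 0 ≤ η s ⬝ᵥ ((P s)⁻¹ *ᵥ η s) := quad_nonneg hNpsd (η s)
    rw [heq1]
    nlinarith [mul_le_mul_of_nonneg_left hz2 hq₁.le]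
  -- Gronwall
  set g : ℝ → ℝ := fun u => Real.exp (q₁ * p₁ * u) * (η u ⬝ᵥ ((P u)⁻¹ *ᵥ η u)) with hgdef
  have hgder : ∀ s, HasDerivAt g
      (Real.exp (q₁ * p₁ * s) * (q₁ * p₁ * 1) * (η s ⬝ᵥ ((P s)⁻¹ *ᵥ η s))
        + Real.exp (q₁ * p₁ * s) * ((F s *ᵥ η s) ⬝ᵥ ((P s)⁻¹ *ᵥ η s)
          + (η s ⬝ᵥ ((-((P s)⁻¹ * P' s * (P s)⁻¹)) *ᵥ η s)
            + η s ⬝ᵥ ((P s)⁻¹ *ᵥ (F s *ᵥ η s))))) s := by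
    intro s
    have he : HasDerivAt (fun u => Real.exp (q₁ * p₁ * u))
        (Real.exp (q₁ * p₁ * s) * (q₁ * p₁ * 1)) s :=
      ((hasDerivAt_id s).const_mul (q₁ * p₁)).exp
    exact he.mul (hVder s)
  have hmono : AntitoneOn g (Set.Ici (0:ℝ)) := by
    apply antitoneOn_of_deriv_nonpos (convex_Ici 0)
    · exact (Differentiable.continuous fun s => (hgder s).differentiableAt).continuousOn
    · intro x _
      exact (hgder x).differentiableAt.differentiableWithinAt
    · intro x hx
      rw [interior_Ici] at hx
      rw [(hgder x).deriv]
      have h1 := hVd_le x hx.le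
      have h2 := (Real.exp_pos (q₁ * p₁ * x)).le
      nlinarith [mul_le_mul_of_nonneg_left h1 h2]
  intro t ht
  have hVt := hmono Set.self_mem_Ici (Set.mem_Ici.2 ht) ht
  have hg0 : g 0 = η 0 ⬝ᵥ ((P 0)⁻¹ *ᵥ η 0) := by
    rw [hgdef]
    simp
  have h1 := quad_nonneg (hPinvLow t ht) (η t)
  rw [Matrix.sub_mulVec, dotProduct_sub, Matrix.smul_mulVec,
    Matrix.one_mulVec, dotProduct_smul, smul_eq_mul] at h1
  have h2 := quad_nonneg (hPinvUp 0 le_rfl) (η 0)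
  rw [Matrix.sub_mulVec, dotProduct_sub, Matrix.smul_mulVec,
    Matrix.one_mulVec, dotProduct_smul, smul_eq_mul] at h2
  have hgt : Real.exp (q₁ * p₁ * t) * (η t ⬝ᵥ ((P t)⁻¹ *ᵥ η t)) ≤ η 0 ⬝ᵥ ((P 0)⁻¹ *ᵥ η 0) := by
    rw [← hg0]
    exact hVt
  have hE := Real.exp_pos (q₁ * p₁ * t)
  have hdq : η t ⬝ᵥ η t ≤ (p₂ / p₁) * (Real.exp (-(q₁ * p₁ * t)) * (η 0 ⬝ᵥ η 0)) := by
    rw [div_mul_eq_mul_div, le_div_iff₀ hp₁, Real.exp_neg]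
    have hVt' : η t ⬝ᵥ ((P t)⁻¹ *ᵥ η t)
        ≤ (Real.exp (q₁ * p₁ * t))⁻¹ * (p₂ * (η 0 ⬝ᵥ η 0)) := by
      rw [inv_mul_eq_div, le_div_iff₀ hE]
      nlinarith
    nlinarith [inv_pos.2 hE]
  have hY : (0:ℝ) ≤ η 0 ⬝ᵥ η 0 := Finset.sum_nonneg fun i _ => mul_self_nonneg _
  calc euclNorm (η t) = Real.sqrt (η t ⬝ᵥ η t) := rfl
    _ ≤ Real.sqrt ((p₂ / p₁) * (Real.exp (-(q₁ * p₁ * t)) * (η 0 ⬝ᵥ η 0))) :=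
        Real.sqrt_le_sqrt hdq
    _ = Real.sqrt (p₂ / p₁) * (Real.sqrt (Real.exp (-(q₁ * p₁ * t))) * Real.sqrt (η 0 ⬝ᵥ η 0)) := by
        rw [Real.sqrt_mul (div_nonneg (hp₁.le.trans hp₂) hp₁.le), Real.sqrt_mul (Real.exp_pos _).le]
    _ = Real.sqrt (p₂ / p₁) * Real.exp (-(q₁ * p₁ * t) / 2) * euclNorm (η 0) := by
        rw [← Real.exp_half, ← mul_assoc]
        rfl
end
end

section
/- Let c₁, c₂, c₃ ∈ ℝ and let v₁, v₂, v₃ : [0,∞) → ℝ be differentiable functions with v_i(0) ≤ c_i for i = 1,2,3. Suppose that for each i ∈ {1,2,3} and every t ≥ 0: if v_i(t) = c_i and v_j(t) ≤ c_j for all j ≠ i, then v_i'(t) < 0. Then v_i(t) ≤ c_i for all t ≥ 0 and all i ∈ {1,2,3}. -/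
open Filter Set Topology

/-- If `v` has negative derivative at `τ`, then `v t < v τ` just to the right of `τ`. -/
lemma eventually_lt_of_hasDerivAt_neg {v : ℝ → ℝ} {d τ : ℝ}
    (hd : HasDerivAt v d τ) (hneg : d < 0) :
    ∀ᶠ t in 𝓝[>] τ, v t < v τ := by
  have h := hasDerivAt_iff_tendsto_slope.mp hd
  have h2 : ∀ᶠ t in 𝓝[≠] τ, slope v τ t < 0 :=
    Filter.Tendsto.eventually_lt_const hneg h
  have h3 : ∀ᶠ t in 𝓝[>] τ, slope v τ t < 0 :=
    h2.filter_mono (nhdsWithin_mono _ (fun x hx => ne_of_gt hx))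
  filter_upwards [h3, self_mem_nhdsWithin] with t hslope (ht : τ < t)
  rw [slope_def_field] at hslope
  rcases div_neg_iff.mp hslope with ⟨h, h'⟩ | ⟨h, h'⟩ <;> linarith

/-- Coupled sublevel-set invariance principle for three differentiable
functions: if each `vᵢ` decreases strictly on its own boundary `{vᵢ = cᵢ}` while the
others satisfy `vⱼ ≤ cⱼ`, then the product of sublevel sets is positively invariant. -/
theorem coupled_sublevel_set_invariance
    (c₁ c₂ c₃ : ℝ) (v₁ v₂ v₃ v₁' v₂' v₃' : ℝ → ℝ)
    (hv₁ : ∀ t, 0 ≤ t → HasDerivAt v₁ (v₁' t) t)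
    (hv₂ : ∀ t, 0 ≤ t → HasDerivAt v₂ (v₂' t) t)
    (hv₃ : ∀ t, 0 ≤ t → HasDerivAt v₃ (v₃' t) t)
    (h₀₁ : v₁ 0 ≤ c₁) (h₀₂ : v₂ 0 ≤ c₂) (h₀₃ : v₃ 0 ≤ c₃)
    (hb₁ : ∀ t, 0 ≤ t → v₁ t = c₁ → v₂ t ≤ c₂ → v₃ t ≤ c₃ → v₁' t < 0)
    (hb₂ : ∀ t, 0 ≤ t → v₂ t = c₂ → v₁ t ≤ c₁ → v₃ t ≤ c₃ → v₂' t < 0)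
    (hb₃ : ∀ t, 0 ≤ t → v₃ t = c₃ → v₁ t ≤ c₁ → v₂ t ≤ c₂ → v₃' t < 0) :
    ∀ t, 0 ≤ t → v₁ t ≤ c₁ ∧ v₂ t ≤ c₂ ∧ v₃ t ≤ c₃ := by
  by_contra hcon
  push_neg at hcon
  obtain ⟨t₀, ht₀, hfail⟩ := hcon
  -- the failure set
  set A : Set ℝ := {t : ℝ | 0 ≤ t ∧ ¬(v₁ t ≤ c₁ ∧ v₂ t ≤ c₂ ∧ v₃ t ≤ c₃)} with hAdef
  have hAne : A.Nonempty := ⟨t₀, ht₀, fun h => absurd (hfail h.1 h.2.1) (not_lt.mpr h.2.2)⟩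
  have hbd : BddBelow A := ⟨0, fun a ha => ha.1⟩
  set τ : ℝ := sInf A with hτdef
  have hτ0 : 0 ≤ τ := le_csInf hAne (fun a ha => ha.1)
  -- τ is not a failure point
  have hτnot : τ ∉ A := by
    intro hmem
    have hsome : c₁ < v₁ τ ∨ c₂ < v₂ τ ∨ c₃ < v₃ τ := by
      by_contra h
      push_neg at h
      exact hmem.2 ⟨h.1, h.2.1, h.2.2⟩
    have hτpos : 0 < τ := by
      rcases eq_or_lt_of_le hτ0 with heq | h
      · exfalso; apply hmem.2; rw [← heq]; exact ⟨h₀₁, h₀₂, h₀₃⟩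
      · exact h
    -- a point slightly to the left of τ is also a failure point
    have key : ∀ (v : ℝ → ℝ) (c : ℝ), ContinuousAt v τ → c < v τ →
        ∃ s, 0 ≤ s ∧ s < τ ∧ c < v s := by
      intro v c hcont hgt
      have e1 : ∀ᶠ s in 𝓝[<] τ, c < v s :=
        (Filter.Tendsto.eventually_const_lt hgt hcont).filter_mono nhdsWithin_le_nhds
      have e2 : ∀ᶠ s in 𝓝[<] τ, 0 < s :=
        eventually_nhdsWithin_of_eventually_nhds (eventually_gt_nhds hτpos)
      obtain ⟨s, hs1, hs2, hs3⟩ := (e1.and (e2.and self_mem_nhdsWithin)).exists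
      exact ⟨s, hs2.le, hs3, hs1⟩
    have : ∃ s, 0 ≤ s ∧ s < τ ∧ s ∈ A := by
      rcases hsome with h | h | h
      · obtain ⟨s, h1, h2, h3⟩ := key v₁ c₁ (hv₁ τ hτ0).continuousAt h
        exact ⟨s, h1, h2, h1, fun hc => absurd hc.1 (not_le.mpr h3)⟩
      · obtain ⟨s, h1, h2, h3⟩ := key v₂ c₂ (hv₂ τ hτ0).continuousAt h
        exact ⟨s, h1, h2, h1, fun hc => absurd hc.2.1 (not_le.mpr h3)⟩
      · obtain ⟨s, h1, h2, h3⟩ := key v₃ c₃ (hv₃ τ hτ0).continuousAt h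
        exact ⟨s, h1, h2, h1, fun hc => absurd hc.2.2 (not_le.mpr h3)⟩
    obtain ⟨s, _, hsτ, hsA⟩ := this
    exact absurd (csInf_le hbd hsA) (not_le.mpr hsτ)
  have hall : v₁ τ ≤ c₁ ∧ v₂ τ ≤ c₂ ∧ v₃ τ ≤ c₃ := by
    by_contra h
    exact hτnot ⟨hτ0, h⟩
  obtain ⟨ha1, ha2, ha3⟩ := hall
  -- eventually to the right of τ all three inequalities hold
  have e1 : ∀ᶠ t in 𝓝[>] τ, v₁ t ≤ c₁ := by
    rcases eq_or_lt_of_le ha1 with heq | hlt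
    · have hd := hb₁ τ hτ0 heq ha2 ha3
      filter_upwards [eventually_lt_of_hasDerivAt_neg (hv₁ τ hτ0) hd] with t ht
      rw [heq] at ht; exact ht.le
    · exact (Filter.Tendsto.eventually_lt_const hlt
        (hv₁ τ hτ0).continuousAt).filter_mono nhdsWithin_le_nhds |>.mono
        (fun t ht => ht.le)
  have e2 : ∀ᶠ t in 𝓝[>] τ, v₂ t ≤ c₂ := by
    rcases eq_or_lt_of_le ha2 with heq | hlt
    · have hd := hb₂ τ hτ0 heq ha1 ha3
      filter_upwards [eventually_lt_of_hasDerivAt_neg (hv₂ τ hτ0) hd] with t ht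
      rw [heq] at ht; exact ht.le
    · exact (Filter.Tendsto.eventually_lt_const hlt
        (hv₂ τ hτ0).continuousAt).filter_mono nhdsWithin_le_nhds |>.mono
        (fun t ht => ht.le)
  have e3 : ∀ᶠ t in 𝓝[>] τ, v₃ t ≤ c₃ := by
    rcases eq_or_lt_of_le ha3 with heq | hlt
    · have hd := hb₃ τ hτ0 heq ha1 ha2
      filter_upwards [eventually_lt_of_hasDerivAt_neg (hv₃ τ hτ0) hd] with t ht
      rw [heq] at ht; exact ht.le
    · exact (Filter.Tendsto.eventually_lt_const hlt
        (hv₃ τ hτ0).continuousAt).filter_mono nhdsWithin_le_nhds |>.mono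
        (fun t ht => ht.le)
  have e : ∀ᶠ t in 𝓝[>] τ, t ∉ A := by
    filter_upwards [e1, e2, e3] with t h1 h2 h3
    exact fun hc => hc.2 ⟨h1, h2, h3⟩
  -- extract an interval (τ, u) disjoint from A
  rw [eventually_iff, mem_nhdsGT_iff_exists_Ioo_subset] at e
  obtain ⟨u, (hu : τ < u), hsub⟩ := e
  have hub : ∀ a ∈ A, u ≤ a := by
    intro a ha
    have hτa : τ ≤ a := csInf_le hbd ha
    by_contra h
    push_neg at h
    have haτ : τ ≠ a := by rintro rfl; exact hτnot ha
    exact hsub ⟨lt_of_le_of_ne hτa haτ, h⟩ ha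
  exact absurd (le_csInf hAne hub) (not_le.mpr hu)
end

section
/- Let (ϑ(t), η̃(t)) ∈ ℝⁿ × ℝ^m be a C¹ curve on [0,∞). Let V₁ : ℝⁿ → ℝ be C¹ with α₁(‖ϑ‖) ≤ V₁(ϑ) ≤ α₂(‖ϑ‖) for all ϑ, where α₁, α₂ are class K∞ and α₃, α₄ are class K, and suppose that for every t ≥ 0 with ‖ϑ(t)‖ ≥ α₄(‖η̃(t)‖) one has (d/dt)V₁(ϑ(t)) ≤ −α₃(‖ϑ(t)‖). Let V₂(t) = η̃(t)ᵀ P(t)⁻¹ η̃(t), where P(t) is symmetric positive definite with P(t)⁻¹ ⪰ p₁I (p₁ > 0), and suppose V₂ is differentiable with (d/dt)V₂(t) ≤ −k₁V₂(t) for some k₁ > 0. Let c₁, c₂ > 0 satisfy c₁ ≥ α₂(α₄(√(c₂/p₁))). If V₁(ϑ(0)) ≤ c₁ and V₂(0) ≤ c₂, then V₁(ϑ(t)) ≤ c₁ and V₂(t) ≤ c₂ for all t ≥ 0. -/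
open Matrix Set

noncomputable section

/-- A class `K` function: continuous, strictly increasing on `[0,∞)`, vanishing at `0`,
and nonnegative. -/
def IsClassK (f : ℝ → ℝ) : Prop :=
  ContinuousOn f (Ici 0) ∧ StrictMonoOn f (Ici 0) ∧ f 0 = 0 ∧ ∀ r, 0 ≤ r → 0 ≤ f r

/-- A class `K∞` function. -/
def IsClassKInf (f : ℝ → ℝ) : Prop :=
  IsClassK f ∧ Filter.Tendsto f Filter.atTop Filter.atTop

/-- Positive invariance of `Ω₁ × Ω₂ = {V₁ ≤ c₁} × {V₂ ≤ c₂}` for the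
state-feedback closed loop with extended Kalman filter. -/
theorem invariance_of_product_sublevel_sets
    {n m : ℕ} (p₁ k₁ c₁ c₂ : ℝ) (hp₁ : 0 < p₁) (hk₁ : 0 < k₁)
    (hc₁ : 0 < c₁) (hc₂ : 0 < c₂)
    (ϑ : ℝ → EuclideanSpace ℝ (Fin n)) (ηe : ℝ → Fin m → ℝ)
    (P : ℝ → Matrix (Fin m) (Fin m) ℝ)
    (V₁ : EuclideanSpace ℝ (Fin n) → ℝ)
    (α₁ α₂ α₃ α₄ : ℝ → ℝ)
    (hϑ : ContDiffOn ℝ 1 ϑ (Ici 0)) (hηe : ContDiffOn ℝ 1 ηe (Ici 0))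
    (hV₁C1 : ContDiff ℝ 1 V₁)
    (hα₁ : IsClassKInf α₁) (hα₂ : IsClassKInf α₂)
    (hα₃ : IsClassK α₃) (hα₄ : IsClassK α₄)
    (hV₁bound : ∀ x : EuclideanSpace ℝ (Fin n), α₁ ‖x‖ ≤ V₁ x ∧ V₁ x ≤ α₂ ‖x‖)
    (hdV₁ : ∀ t, 0 ≤ t → α₄ (euclNorm (ηe t)) ≤ ‖ϑ t‖ →
      derivWithin (fun s => V₁ (ϑ s)) (Ici 0) t ≤ -α₃ ‖ϑ t‖)
    (hP : ∀ t, 0 ≤ t → (P t).PosDef ∧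
      ((P t)⁻¹ - p₁ • (1 : Matrix (Fin m) (Fin m) ℝ)).PosSemidef)
    (hV₂diff : DifferentiableOn ℝ (fun s => ηe s ⬝ᵥ ((P s)⁻¹ *ᵥ ηe s)) (Ici 0))
    (hdV₂ : ∀ t, 0 ≤ t →
      derivWithin (fun s => ηe s ⬝ᵥ ((P s)⁻¹ *ᵥ ηe s)) (Ici 0) t ≤
        -k₁ * (ηe t ⬝ᵥ ((P t)⁻¹ *ᵥ ηe t)))
    (hcc : α₂ (α₄ (Real.sqrt (c₂ / p₁))) ≤ c₁)
    (h₀₁ : V₁ (ϑ 0) ≤ c₁)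
    (h₀₂ : ηe 0 ⬝ᵥ ((P 0)⁻¹ *ᵥ ηe 0) ≤ c₂) :
    ∀ t, 0 ≤ t → V₁ (ϑ t) ≤ c₁ ∧ ηe t ⬝ᵥ ((P t)⁻¹ *ᵥ ηe t) ≤ c₂ := by
  -- notation
  set f₂ : ℝ → ℝ := fun s => ηe s ⬝ᵥ ((P s)⁻¹ *ᵥ ηe s) with hf₂def
  -- pointwise lower bound: p₁ * (x ⬝ᵥ x) ≤ f₂ t
  have hlow : ∀ t, 0 ≤ t → p₁ * (ηe t ⬝ᵥ ηe t) ≤ f₂ t := by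
    intro t ht
    have h := (hP t ht).2.dotProduct_mulVec_nonneg (ηe t)
    simp only [star_trivial, sub_mulVec, smul_mulVec, one_mulVec,
      dotProduct_sub, dotProduct_smul, smul_eq_mul] at h
    linarith
  have hdot_nonneg : ∀ t, 0 ≤ ηe t ⬝ᵥ ηe t := fun t =>
    Finset.sum_nonneg fun i _ => mul_self_nonneg _
  -- Step 1: f₂ is antitone on Ici 0
  have hf₂anti : AntitoneOn f₂ (Ici (0:ℝ)) := by
    apply antitoneOn_of_deriv_nonpos (convex_Ici 0) hV₂diff.continuousOn
      (hV₂diff.mono interior_subset)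
    intro s hs
    rw [interior_Ici] at hs
    have hs0 : (0:ℝ) ≤ s := le_of_lt hs
    have hmem : Ici (0:ℝ) ∈ nhds s := Ici_mem_nhds hs
    have hderiv : deriv f₂ s = derivWithin f₂ (Ici 0) s :=
      (derivWithin_of_mem_nhds hmem).symm
    rw [hderiv]
    have h1 := hdV₂ s hs0
    have h2 : 0 ≤ f₂ s := le_trans (mul_nonneg hp₁.le (hdot_nonneg s)) (hlow s hs0)
    nlinarith
  have hV₂ : ∀ t, 0 ≤ t → f₂ t ≤ c₂ := fun t ht =>
    le_trans (hf₂anti self_mem_Ici ht ht) h₀₂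
  -- norm bound on ηe
  have hηnorm : ∀ t, 0 ≤ t → euclNorm (ηe t) ≤ Real.sqrt (c₂ / p₁) := by
    intro t ht
    apply Real.sqrt_le_sqrt
    have := hlow t ht
    have := hV₂ t ht
    rw [le_div_iff₀ hp₁]
    nlinarith
  -- Step 2: V₁ ∘ ϑ invariance
  set g : ℝ → ℝ := fun s => V₁ (ϑ s) with hgdef
  have hgcont : ContinuousOn g (Ici 0) :=
    hV₁C1.continuous.comp_continuousOn hϑ.continuousOn
  have hgdiff : ∀ s : ℝ, 0 < s → DifferentiableAt ℝ g s := by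
    intro s hs
    exact (hV₁C1.differentiable one_ne_zero (ϑ s)).comp s
      (((hϑ.differentiableOn one_ne_zero) s (le_of_lt hs)).differentiableAt
        (Ici_mem_nhds hs))
  have hV₁inv : ∀ t, 0 ≤ t → g t ≤ c₁ := by
    intro t ht
    by_contra hgt
    push_neg at hgt
    have ht0 : 0 < t := by
      rcases eq_or_lt_of_le ht with h | h
      · exact absurd h₀₁ (by rw [← h] at hgt; exact not_le.mpr hgt)
      · exact h
    set S : Set ℝ := {s | s ∈ Icc 0 t ∧ g s ≤ c₁} with hSdef
    have hSne : S.Nonempty := ⟨0, ⟨le_refl 0, ht⟩, h₀₁⟩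
    have hSbdd : BddAbove S := ⟨t, fun s hs => hs.1.2⟩
    have hSclosed : IsClosed S := by
      have : S = Icc 0 t ∩ g ⁻¹' (Iic c₁) := by
        ext s; simp [hSdef, and_assoc]
      rw [this]
      exact (hgcont.mono Icc_subset_Ici_self).preimage_isClosed_of_isClosed
        isClosed_Icc isClosed_Iic
    set t₀ := sSup S with ht₀def
    have ht₀S : t₀ ∈ S := hSclosed.csSup_mem hSne hSbdd
    have ht₀0 : 0 ≤ t₀ := ht₀S.1.1
    have ht₀t : t₀ ≤ t := ht₀S.1.2
    have hgt₀ : g t₀ ≤ c₁ := ht₀S.2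
    have ht₀lt : t₀ < t := lt_of_le_of_ne ht₀t
      (fun h => absurd hgt (not_lt.mpr (h ▸ hgt₀)))
    -- on (t₀, t], g > c₁
    have hgbig : ∀ s, t₀ < s → s ≤ t → c₁ < g s := by
      intro s hs1 hs2
      by_contra hle
      push_neg at hle
      have : s ∈ S := ⟨⟨le_trans ht₀0 (le_of_lt hs1), hs2⟩, hle⟩
      exact absurd (le_csSup hSbdd this) (not_le.mpr hs1)
    -- g is antitone on [t₀, t]
    have hganti : AntitoneOn g (Icc t₀ t) := by
      apply antitoneOn_of_deriv_nonpos (convex_Icc t₀ t)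
        (hgcont.mono (Icc_subset_Ici_self.trans (Ici_subset_Ici.mpr ht₀0)))
      · intro s hs
        rw [interior_Icc] at hs
        exact (hgdiff s (lt_of_le_of_lt ht₀0 hs.1)).differentiableWithinAt
      · intro s hs
        rw [interior_Icc] at hs
        have hs0 : 0 < s := lt_of_le_of_lt ht₀0 hs.1
        have hgs : c₁ < g s := hgbig s hs.1 (le_of_lt hs.2)
        -- chain of inequalities giving α₄ (euclNorm (ηe s)) ≤ ‖ϑ s‖
        have hα₂mono := hα₂.1.2.1
        have hsqrt0 : (0:ℝ) ≤ Real.sqrt (c₂ / p₁) := Real.sqrt_nonneg _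
        have hα₄s : 0 ≤ α₄ (Real.sqrt (c₂ / p₁)) := hα₄.2.2.2 _ hsqrt0
        have hchain : α₂ (α₄ (Real.sqrt (c₂ / p₁))) ≤ α₂ ‖ϑ s‖ :=
          le_trans hcc (le_trans (le_of_lt hgs) (hV₁bound (ϑ s)).2)
        have hnorm_ge : α₄ (Real.sqrt (c₂ / p₁)) ≤ ‖ϑ s‖ :=
          (hα₂mono.le_iff_le (mem_Ici.mpr hα₄s) (mem_Ici.mpr (norm_nonneg _))).mp hchain
        have hη0 : (0:ℝ) ≤ euclNorm (ηe s) := Real.sqrt_nonneg _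
        have hα₄mono : α₄ (euclNorm (ηe s)) ≤ α₄ (Real.sqrt (c₂ / p₁)) :=
          hα₄.2.1.monotoneOn (mem_Ici.mpr hη0) (mem_Ici.mpr hsqrt0)
            (hηnorm s (le_of_lt hs0))
        have hkey : α₄ (euclNorm (ηe s)) ≤ ‖ϑ s‖ := le_trans hα₄mono hnorm_ge
        have hd := hdV₁ s (le_of_lt hs0) hkey
        calc deriv g s = derivWithin g (Ici 0) s :=
              (derivWithin_of_mem_nhds (Ici_mem_nhds hs0)).symm
          _ ≤ -α₃ ‖ϑ s‖ := hd
          _ ≤ 0 := neg_nonpos.mpr (hα₃.2.2.2 _ (norm_nonneg _))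
    have := hganti (left_mem_Icc.mpr ht₀t) (right_mem_Icc.mpr ht₀t) ht₀t
    exact absurd hgt (not_lt.mpr (le_trans this hgt₀))
  exact fun t ht => ⟨hV₁inv t ht, hV₂ t ht⟩
end
end

section
/- Let ε, k, k_b > 0 and let w : [0,T₀] → [0,∞) be differentiable and satisfy ε·w'(t) ≤ −k·w(t) + ε·k_b·√(w(t)) for all t ∈ [0,T₀]. Then, for all t ∈ [0,T₀], √(w(t)) ≤ e^{−kt/(2ε)}·√(w(0)) + (ε k_b / k)·(1 − e^{−kt/(2ε)}); in particular √(w(t)) ≤ e^{−kt/(2ε)}·√(w(0)) + ε k_b/k. -/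
open Set

/-- Scalar comparison lemma for the fast variable:
from `ε·ẇ ≤ −k·w + ε·k_b·√w` on `[0,T₀]` one gets
`√(w t) ≤ e^{−kt/(2ε)}√(w 0) + (εk_b/k)(1 − e^{−kt/(2ε)})`, and in particular
`√(w t) ≤ e^{−kt/(2ε)}√(w 0) + εk_b/k`. -/
theorem fast_variable_comparison
    (ε k kb T₀ : ℝ) (hε : 0 < ε) (hk : 0 < k) (hkb : 0 < kb) (hT₀ : 0 < T₀)
    (w w' : ℝ → ℝ)
    (hwnn : ∀ t ∈ Icc (0:ℝ) T₀, 0 ≤ w t)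
    (hw : ∀ t ∈ Icc (0:ℝ) T₀, HasDerivWithinAt w (w' t) (Icc 0 T₀) t)
    (hineq : ∀ t ∈ Icc (0:ℝ) T₀, ε * w' t ≤ -k * w t + ε * kb * Real.sqrt (w t)) :
    ∀ t ∈ Icc (0:ℝ) T₀,
      Real.sqrt (w t) ≤ Real.exp (-(k * t) / (2 * ε)) * Real.sqrt (w 0)
          + (ε * kb / k) * (1 - Real.exp (-(k * t) / (2 * ε))) ∧
      Real.sqrt (w t) ≤ Real.exp (-(k * t) / (2 * ε)) * Real.sqrt (w 0) + ε * kb / k := by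
  intro t ht
  set s0 := Real.sqrt (w 0) with hs0
  have hs0nn : 0 ≤ s0 := Real.sqrt_nonneg _
  set c := ε * kb / k with hc
  have hcpos : 0 < c := by positivity
  -- continuity of w on the interval
  have hwc : ContinuousOn w (Icc 0 T₀) := fun x hx => (hw x hx).continuousWithinAt
  -- liminf slope condition
  have hf' : ∀ x ∈ Ico (0:ℝ) T₀, ∀ r, w' x < r → ∃ᶠ z in nhdsWithin x (Ioi x), slope w x z < r := by
    intro x hx r hr
    have h1 := (hw x (Ico_subset_Icc_self hx)).limsup_slope_le hr
    have h2 : ∀ᶠ z in nhdsWithin x (Ioc x T₀), slope w x z < r := by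
      apply h1.filter_mono (nhdsWithin_mono _ _)
      intro z hz
      exact ⟨⟨le_of_lt (lt_of_le_of_lt hx.1 hz.1), hz.2⟩, ne_of_gt hz.1⟩
    rw [nhdsWithin_Ioc_eq_nhdsGT hx.2] at h2
    exact h2.frequently
  have key : ∀ δ : ℝ, 0 < δ →
      Real.sqrt (w t) ≤ Real.exp (-k / (2 * ε) * t) * s0 + c * (1 - Real.exp (-k / (2 * ε) * t)) + δ := by
    intro δ hδ
    set A : ℝ → ℝ := fun τ => Real.exp (-k / (2 * ε) * τ) * (s0 + δ) + (c + δ) * (1 - Real.exp (-k / (2 * ε) * τ)) with hA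
    set A' : ℝ → ℝ := fun τ => (-k / (2 * ε) * Real.exp (-k / (2 * ε) * τ)) * (s0 + δ) + (c + δ) * (0 - (-k / (2 * ε) * Real.exp (-k / (2 * ε) * τ))) with hA'
    have hE : ∀ τ : ℝ, HasDerivAt (fun y => Real.exp (-k / (2 * ε) * y)) (-k / (2 * ε) * Real.exp (-k / (2 * ε) * τ)) τ := by
      intro τ
      have := (((hasDerivAt_id τ).const_mul (-k / (2 * ε)))).exp
      simpa [mul_comm] using this
    have hAd : ∀ τ : ℝ, HasDerivAt A (A' τ) τ := by
      intro τ
      exact ((hE τ).mul_const _).add (((hasDerivAt_const τ (1:ℝ)).sub (hE τ)).const_mul _)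
    have hApos : ∀ τ : ℝ, 0 ≤ τ → 0 < A τ := by
      intro τ hτ
      have he1 : Real.exp (-k / (2 * ε) * τ) ≤ 1 := by
        apply Real.exp_le_one_iff.mpr
        simp only [neg_div, neg_mul, neg_nonpos]
        positivity
      have he0 : 0 < Real.exp (-k / (2 * ε) * τ) := Real.exp_pos _
      have h5 : 0 < Real.exp (-k / (2 * ε) * τ) * (s0 + δ) := by positivity
      have h4 : 0 ≤ (c + δ) * (1 - Real.exp (-k / (2 * ε) * τ)) :=
        mul_nonneg (by positivity) (by linarith)
      simp only [hA]
      linarith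
    have hB : ∀ x ∈ Icc (0:ℝ) T₀, w x ≤ A x * A x := by
      apply image_le_of_liminf_slope_right_lt_deriv_boundary hwc hf'
      · -- w 0 ≤ A 0 * A 0
        have hA0 : A 0 = s0 + δ := by simp [hA]
        have : w 0 = s0 * s0 := by rw [hs0, Real.mul_self_sqrt (hwnn 0 ⟨le_refl _, le_of_lt hT₀⟩)]
        rw [hA0, this]; nlinarith
      · exact fun x => (hAd x).mul (hAd x)
      · intro x hx hfx
        have hxI : x ∈ Icc (0:ℝ) T₀ := Ico_subset_Icc_self hx
        have h1 := hineq x hxI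
        have hAx : 0 < A x := hApos x hx.1
        have hsq : Real.sqrt (w x) = A x := by
          rw [hfx, Real.sqrt_mul_self (le_of_lt hAx)]
        rw [hsq] at h1
        rw [hfx] at h1
        -- goal: w' x < A' x * A x + A x * A' x
        have hAval : A' x = -k / (2 * ε) * (A x - (c + δ)) := by
          simp only [hA, hA']; ring
        rw [hAval]
        have hkc : k * c = ε * kb := by rw [hc]; field_simp [hk.ne']
        have hεw : w' x ≤ (-k * (A x * A x) + ε * kb * A x) / ε := by
          rw [le_div_iff₀ hε, mul_comm]
          exact h1
        have hval : -k / (2 * ε) * (A x - (c + δ)) * A x + A x * (-k / (2 * ε) * (A x - (c + δ)))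
            = (-k * (A x * A x) + k * (c + δ) * A x) / ε := by
          field_simp
          ring
        have h2 : (-k * (A x * A x) + ε * kb * A x) / ε <
            -k / (2 * ε) * (A x - (c + δ)) * A x + A x * (-k / (2 * ε) * (A x - (c + δ))) := by
          rw [hval, div_lt_div_iff₀ hε hε]
          have h3 : 0 < k * δ * A x := by positivity
          have hkcA : k * c * A x = ε * kb * A x := by rw [hkc]
          nlinarith [h3, hkcA]
        exact lt_of_le_of_lt hεw h2
    have hwt := hB t ht
    have hAt : 0 < A t := hApos t ht.1
    have : Real.sqrt (w t) ≤ A t := by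
      calc Real.sqrt (w t) ≤ Real.sqrt (A t * A t) := Real.sqrt_le_sqrt hwt
        _ = A t := Real.sqrt_mul_self (le_of_lt hAt)
    calc Real.sqrt (w t) ≤ A t := this
      _ = Real.exp (-k / (2 * ε) * t) * s0 + c * (1 - Real.exp (-k / (2 * ε) * t)) + δ := by
          simp only [hA]; ring
  have hmain : Real.sqrt (w t) ≤ Real.exp (-k / (2 * ε) * t) * s0 + c * (1 - Real.exp (-k / (2 * ε) * t)) := by
    apply le_of_forall_pos_le_add
    intro δ hδ
    exact key δ hδ
  have hexp : Real.exp (-(k * t) / (2 * ε)) = Real.exp (-k / (2 * ε) * t) := by ring_nf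
  rw [hexp]
  constructor
  · exact hmain
  · have hE1 : Real.exp (-k / (2 * ε) * t) ≥ 0 := le_of_lt (Real.exp_pos _)
    nlinarith [hmain]
end

section
/- Fix constants k, k_b, c > 0, an integer ρ ≥ 1, and β > (k_b/k)². Then there exist ε₃ > 0 and a function T : (0,ε₃] → (0,∞) with T(ε) → 0 as ε → 0⁺ such that: for every ε ∈ (0,ε₃] and every differentiable w : [0,∞) → [0,∞) satisfying ε·w'(t) ≤ −k·w(t) + ε·k_b·√(w(t)) for all t ≥ 0 and w(0) ≤ c²/ε^{2ρ}, one has w(t) ≤ β·ε² for all t ≥ T(ε). -/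
open Set

/-- If `g` has derivative `g'` on `[0,∞)` and `g' ≤ 0` wherever `g > 0`, then
`g t ≤ max (g 0) 0` for all `t ≥ 0`. -/
lemma fvrt_aux (g g' : ℝ → ℝ)
    (hd : ∀ t, 0 ≤ t → HasDerivAt g (g' t) t)
    (h : ∀ t, 0 ≤ t → 0 < g t → g' t ≤ 0) :
    ∀ t, 0 ≤ t → g t ≤ max (g 0) 0 := by
  intro t ht
  by_contra hgt
  push_neg at hgt
  set A := max (g 0) 0 with hA
  set m := (A + g t) / 2 with hm
  have hA0 : 0 ≤ A := le_max_right _ _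
  have hmA : A < m := by simp only [hm]; linarith
  have hmlt : m < g t := by simp only [hm]; linarith
  have hm0 : 0 < m := lt_of_le_of_lt hA0 hmA
  have hcont : ContinuousOn g (Icc 0 t) := fun u hu =>
    ((hd u hu.1).continuousAt).continuousWithinAt
  set S : Set ℝ := {u ∈ Icc 0 t | g u ≤ m} with hS
  have h0S : (0:ℝ) ∈ S := ⟨⟨le_refl _, ht⟩, le_trans (le_max_left _ _) hmA.le⟩
  have hSclosed : IsClosed S := by
    have := hcont.preimage_isClosed_of_isClosed isClosed_Icc (isClosed_Iic (a := m))
    exact this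
  have hSbdd : BddAbove S := ⟨t, fun u hu => hu.1.2⟩
  have hSne : S.Nonempty := ⟨0, h0S⟩
  set r := sSup S with hr
  have hrS : r ∈ S := hSclosed.csSup_mem hSne hSbdd
  have hrt : r < t := lt_of_le_of_ne hrS.1.2 (fun hrt => by
    rw [hrt] at hrS; exact absurd hrS.2 (not_le.mpr hmlt))
  have hr0 : 0 ≤ r := hrS.1.1
  have hgu : ∀ u, u ∈ Ioc r t → m < g u := by
    intro u hu
    by_contra hgu
    push_neg at hgu
    have : u ∈ S := ⟨⟨le_trans hr0 hu.1.le, hu.2⟩, hgu⟩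
    exact absurd (le_csSup hSbdd this) (not_le.mpr hu.1)
  have hanti : AntitoneOn g (Icc r t) := by
    apply antitoneOn_of_deriv_nonpos (convex_Icc r t)
    · intro u hu
      exact ((hd u (le_trans hr0 hu.1)).continuousAt).continuousWithinAt
    · intro u hu
      rw [interior_Icc] at hu
      exact ((hd u (le_trans hr0 hu.1.le)).differentiableAt).differentiableWithinAt
    · intro u hu
      rw [interior_Icc] at hu
      have hu0 : 0 ≤ u := le_trans hr0 hu.1.le
      have : 0 < g u := lt_trans hm0 (hgu u ⟨hu.1, hu.2.le⟩)
      rw [(hd u hu0).deriv]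
      exact h u hu0 this
  have := hanti ⟨le_refl r, hrt.le⟩ ⟨hrt.le, le_refl t⟩ hrt.le
  linarith [hrS.2]

set_option maxHeartbeats 1600000 in
/-- Reaching-time estimate for the fast variable: despite initial conditions
peaking like `1/ε^ρ`, the fast Lyapunov function enters `{w ≤ βε²}` within a time `T(ε) → 0`
and remains there, provided `β > (k_b/k)²`. -/
theorem fast_variable_reaching_time
    (k kb c : ℝ) (ρ : ℕ) (β : ℝ)
    (hk : 0 < k) (hkb : 0 < kb) (hc : 0 < c) (hρ : 1 ≤ ρ)
    (hβ : (kb / k) ^ 2 < β) :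
    ∃ ε₃ > (0:ℝ), ∃ T : ℝ → ℝ,
      (∀ ε ∈ Ioc (0:ℝ) ε₃, 0 < T ε) ∧
      Filter.Tendsto T (nhdsWithin 0 (Ioi 0)) (nhds 0) ∧
      ∀ ε ∈ Ioc (0:ℝ) ε₃, ∀ w w' : ℝ → ℝ,
        (∀ t, 0 ≤ t → 0 ≤ w t) →
        (∀ t, 0 ≤ t → HasDerivAt w (w' t) t) →
        (∀ t, 0 ≤ t → ε * w' t ≤ -k * w t + ε * kb * Real.sqrt (w t)) →
        w 0 ≤ c ^ 2 / ε ^ (2 * ρ) →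
        ∀ t, T ε ≤ t → w t ≤ β * ε ^ 2 := by
  -- intermediate level β'
  set β' : ℝ := (β + (kb / k) ^ 2) / 2 with hβ'def
  have hkbk : 0 < kb / k := div_pos hkb hk
  have hβpos : 0 < β := lt_trans (by positivity) hβ
  have hβ'pos : 0 < β' := by simp only [hβ'def]; positivity
  have hβ'lt : β' < β := by simp only [hβ'def]; linarith
  have hβ'gt : (kb / k) ^ 2 < β' := by simp only [hβ'def]; linarith
  set s : ℝ := Real.sqrt β' with hsdef
  have hs0 : 0 < s := Real.sqrt_pos.mpr hβ'pos
  have hs_gt : kb / k < s := by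
    have := Real.sqrt_lt_sqrt (sq_nonneg (kb / k)) hβ'gt
    rwa [Real.sqrt_sq hkbk.le] at this
  set δ : ℝ := k - kb / s with hδdef
  have hδ0 : 0 < δ := by
    have : kb / s < k := by
      rw [div_lt_iff₀ hs0]
      calc kb = (kb / k) * k := by field_simp
        _ < s * k := by exact mul_lt_mul_of_pos_right hs_gt hk
        _ = k * s := mul_comm _ _
    simp only [hδdef]; linarith
  set K : ℝ := c ^ 2 / (β - β') with hKdef
  have hK0 : 0 < K := div_pos (by positivity) (by linarith)
  set n : ℕ := 2 * ρ + 2 with hndef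
  clear_value n K δ s β'
  refine ⟨1, one_pos, fun ε => (ε / δ) * (1 + |Real.log K| + n * |Real.log ε|), ?_, ?_, ?_⟩
  · intro ε hε
    have h1 : 0 < ε / δ := div_pos hε.1 hδ0
    have h2 : (0:ℝ) < 1 + |Real.log K| + n * |Real.log ε| := by positivity
    positivity
  · -- Tendsto T → 0
    have hxlog : Filter.Tendsto (fun x : ℝ => x * |Real.log x|) (nhdsWithin 0 (Ioi 0)) (nhds 0) := by
      have h := tendsto_log_mul_rpow_nhdsGT_zero (r := 1) one_pos
      have h' : Filter.Tendsto (fun x : ℝ => -(Real.log x * x ^ (1:ℝ))) (nhdsWithin 0 (Ioi 0)) (nhds 0) := by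
        simpa using h.neg
      apply h'.congr'
      filter_upwards [Ioo_mem_nhdsGT_of_mem (by norm_num : (0:ℝ) ∈ Ico (0:ℝ) 1)] with x hx
      have hx0 : 0 < x := hx.1
      have hlx : Real.log x < 0 := Real.log_neg hx0 hx.2
      rw [Real.rpow_one, abs_of_neg hlx]
      ring
    have hmain : Filter.Tendsto (fun ε : ℝ => (ε / δ) * (1 + |Real.log K| + n * |Real.log ε|))
        (nhdsWithin 0 (Ioi 0)) (nhds 0) := by
      have h1 : Filter.Tendsto (fun ε : ℝ => ε * (1 + |Real.log K|) / δ + (n / δ) * (ε * |Real.log ε|))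
          (nhdsWithin 0 (Ioi 0)) (nhds 0) := by
        have hid : Filter.Tendsto (fun ε : ℝ => ε) (nhdsWithin (0:ℝ) (Ioi 0)) (nhds 0) :=
          Filter.tendsto_id.mono_left nhdsWithin_le_nhds
        have ha : Filter.Tendsto (fun ε : ℝ => ε * (1 + |Real.log K|) / δ)
            (nhdsWithin 0 (Ioi 0)) (nhds 0) := by
          simpa [mul_div_assoc] using hid.mul_const ((1 + |Real.log K|) / δ)
        have hb := hxlog.const_mul ((n : ℝ) / δ)
        simpa using ha.add (by simpa using hb)
      apply h1.congr
      intro ε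
      field_simp
    exact hmain
  · -- main estimate
    intro ε hε w w' hw hd hineq h0 t hTt
    have hε0 : 0 < ε := hε.1
    have hT0 : 0 < (ε / δ) * (1 + |Real.log K| + n * |Real.log ε|) := by
      have h1 : 0 < ε / δ := div_pos hε0 hδ0
      have h2 : (0:ℝ) < 1 + |Real.log K| + n * |Real.log ε| := by positivity
      positivity
    have ht0 : 0 ≤ t := le_of_lt (lt_of_lt_of_le hT0 hTt)
    -- define g
    set g : ℝ → ℝ := fun u => (w u - β' * ε ^ 2) * Real.exp (δ / ε * u) with hgdef
    set g' : ℝ → ℝ := fun u => (w' u + δ / ε * (w u - β' * ε ^ 2)) * Real.exp (δ / ε * u) with hg'def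
    have hgd : ∀ u, 0 ≤ u → HasDerivAt g (g' u) u := by
      intro u hu
      have h1 : HasDerivAt (fun x => w x - β' * ε ^ 2) (w' u) u := (hd u hu).sub_const _
      have h2 : HasDerivAt (fun x : ℝ => Real.exp (δ / ε * x)) (δ / ε * Real.exp (δ / ε * u)) u := by
        have := ((hasDerivAt_id u).const_mul (δ / ε)).exp
        simpa [mul_comm] using this
      have := h1.mul h2
      convert this using 1
      show (w' u + δ / ε * (w u - β' * ε ^ 2)) * Real.exp (δ / ε * u) = _
      ring
      all_goals rfl
    have hgd' : ∀ u, 0 ≤ u → 0 < g u → g' u ≤ 0 := by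
      intro u hu hgu
      have hexp : 0 < Real.exp (δ / ε * u) := Real.exp_pos _
      have hwu : β' * ε ^ 2 < w u := by
        by_contra hcon
        push_neg at hcon
        have : g u ≤ 0 := mul_nonpos_of_nonpos_of_nonneg (by linarith) hexp.le
        linarith
      have hwupos : 0 < w u := lt_of_le_of_lt (by positivity) hwu
      -- sqrt bound: sqrt (w u) ≤ w u / (s * ε)
      have hsε : 0 < s * ε := mul_pos hs0 hε0
      have hsq : s * ε ≤ Real.sqrt (w u) := by
        have h1 : Real.sqrt (β' * ε ^ 2) ≤ Real.sqrt (w u) := Real.sqrt_le_sqrt hwu.le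
        have h2 : Real.sqrt (β' * ε ^ 2) = s * ε := by
          rw [Real.sqrt_mul hβ'pos.le, Real.sqrt_sq hε0.le, hsdef]
        linarith
      have hsqrt_le : Real.sqrt (w u) ≤ w u / (s * ε) := by
        rw [le_div_iff₀ hsε]
        calc Real.sqrt (w u) * (s * ε) ≤ Real.sqrt (w u) * Real.sqrt (w u) := by
              exact mul_le_mul_of_nonneg_left hsq (Real.sqrt_nonneg _)
          _ = w u := Real.mul_self_sqrt hwupos.le
      have hkey : ε * w' u ≤ -δ * w u := by
        have h1 := hineq u hu
        have h2 : ε * kb * Real.sqrt (w u) ≤ kb / s * w u := by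
          calc ε * kb * Real.sqrt (w u) ≤ ε * kb * (w u / (s * ε)) := by
                exact mul_le_mul_of_nonneg_left hsqrt_le (by positivity)
            _ = kb / s * w u := by field_simp
        have h5 : -δ * w u = -k * w u + kb / s * w u := by simp only [hδdef]; ring
        rw [h5]
        linarith
      have hw' : w' u ≤ -(δ / ε) * w u := by
        have h6 : w' u ≤ -δ * w u / ε := by
          rw [le_div_iff₀ hε0]
          linarith [hkey]
        calc w' u ≤ -δ * w u / ε := h6
          _ = -(δ / ε) * w u := by ring
      have hsum : w' u + δ / ε * (w u - β' * ε ^ 2) ≤ 0 := by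
        have h3 : w u - β' * ε ^ 2 ≤ w u := by nlinarith
        have h4 : δ / ε * (w u - β' * ε ^ 2) ≤ δ / ε * w u :=
          mul_le_mul_of_nonneg_left h3 (by positivity)
        linarith
      exact mul_nonpos_of_nonpos_of_nonneg hsum hexp.le
    have hfinal := fvrt_aux g g' hgd hgd' t ht0
    -- bound max (g 0) 0 ≤ c^2/ε^(2ρ)
    have hg0 : g 0 = w 0 - β' * ε ^ 2 := by simp [hgdef]
    have hw0 : 0 ≤ w 0 := hw 0 le_rfl
    have hc2 : 0 < c ^ 2 / ε ^ (2 * ρ) := by positivity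
    have hmax : max (g 0) 0 ≤ c ^ 2 / ε ^ (2 * ρ) := by
      apply max_le _ hc2.le
      rw [hg0]
      have hb : 0 ≤ β' * ε ^ 2 := by positivity
      linarith
    have hgt : (w t - β' * ε ^ 2) * Real.exp (δ / ε * t) ≤ c ^ 2 / ε ^ (2 * ρ) :=
      le_trans hfinal hmax
    -- exp lower bound via t ≥ T(ε)
    have hεδ : 0 < δ / ε := div_pos hδ0 hε0
    have hexp_lb : Real.log K - (n : ℝ) * Real.log ε ≤ δ / ε * t := by
      have h1 : δ / ε * ((ε / δ) * (1 + |Real.log K| + n * |Real.log ε|)) ≤ δ / ε * t :=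
        mul_le_mul_of_nonneg_left hTt hεδ.le
      have h2 : δ / ε * ((ε / δ) * (1 + |Real.log K| + n * |Real.log ε|))
          = 1 + |Real.log K| + n * |Real.log ε| := by
        field_simp
      rw [h2] at h1
      have h3 : Real.log K ≤ |Real.log K| := le_abs_self _
      have h4 : -Real.log ε ≤ |Real.log ε| := neg_le_abs _
      have h5 : (n : ℝ) * (-Real.log ε) ≤ (n : ℝ) * |Real.log ε| :=
        mul_le_mul_of_nonneg_left h4 (by positivity)
      linarith
    have hexp_bound : Real.exp (-(δ / ε * t)) ≤ ε ^ n / K := by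
      have h7 : Real.exp (-(δ / ε * t)) ≤ Real.exp ((n : ℝ) * Real.log ε - Real.log K) :=
        Real.exp_le_exp.mpr (by linarith)
      have heq : Real.exp ((n : ℝ) * Real.log ε - Real.log K) = ε ^ n / K := by
        rw [Real.exp_sub, Real.exp_nat_mul, Real.exp_log hε0, Real.exp_log hK0]
      rw [heq] at h7
      exact h7
    -- combine
    have hexpt : 0 < Real.exp (δ / ε * t) := Real.exp_pos _
    have hwt : w t - β' * ε ^ 2 ≤ (c ^ 2 / ε ^ (2 * ρ)) * Real.exp (-(δ / ε * t)) := by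
      rw [Real.exp_neg]
      rw [← le_div_iff₀ hexpt] at hgt
      rwa [div_eq_mul_inv] at hgt
    have hrhs : (c ^ 2 / ε ^ (2 * ρ)) * Real.exp (-(δ / ε * t)) ≤ (β - β') * ε ^ 2 := by
      calc (c ^ 2 / ε ^ (2 * ρ)) * Real.exp (-(δ / ε * t))
          ≤ (c ^ 2 / ε ^ (2 * ρ)) * (ε ^ n / K) := by
            exact mul_le_mul_of_nonneg_left hexp_bound (by positivity)
        _ = (β - β') * ε ^ 2 := by
            have hεpow : (ε:ℝ) ^ n = ε ^ (2 * ρ) * ε ^ 2 := by rw [hndef, pow_add]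
            have h2ρ : (ε:ℝ) ^ (2 * ρ) ≠ 0 := pow_ne_zero _ hε0.ne'
            have hββ' : β - β' ≠ 0 := by linarith
            have hcne : c ≠ 0 := hc.ne'
            rw [hεpow, hKdef]
            field_simp
    linarith
end
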